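/- arXiv:1506.07850 — 6 statements merged into one kernel-verified Lean document; each statement's English description precedes it below -/
import Mathlib

section
/- Let n ≥ 1 and let (P_j)_{j ∈ Fin n} be a projective measurement on a complex Hilbert space H. Then for every continuous linear operator A on H, Σ_j P_j A P_j = 2^{1−n} · A + (1/2^n) · Σ_{x ∈ S} U_x A U_x†, where U_x = Σ_j x_j P_j and S is the set of sign strings x : Fin n → ℝ (each x_j ∈ {−1,1}) excluding the two constant strings (1,…,1) and (−1,…,−1). In particular, the channel ρ ↦ Σ_j P_j ρ P_j of performing the measurement and discarding the outcome is a mixture that applies the identity map with nonzero probability q = 2^{1−n}. -/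
section aux

noncomputable abbrev SignSet : Finset ℝ := ({-1, 1} : Finset ℝ)

lemma sign_mem_cases (y : ↥SignSet) : (y : ℝ) = -1 ∨ (y : ℝ) = 1 := by
  have h := y.2
  rw [Finset.mem_insert, Finset.mem_singleton] at h
  exact h

def negSign (y : ↥SignSet) : ↥SignSet :=
  ⟨-(y : ℝ), by rcases sign_mem_cases y with h | h <;> simp [SignSet, h]⟩

lemma negSign_negSign (y : ↥SignSet) : negSign (negSign y) = y := by
  simp [negSign]

lemma signs_sum_offdiag {n : ℕ} (j k : Fin n) (hjk : j ≠ k) :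
    ∑ x : Fin n → ↥SignSet, ((x j : ℝ) : ℂ) * ((x k : ℝ) : ℂ) = 0 := by
  classical
  apply Finset.sum_ninvolution (fun x => Function.update x k (negSign (x k)))
  · intro x
    rw [Function.update_of_ne hjk, Function.update_self]
    simp only [negSign]
    push_cast
    ring
  · intro x hx h
    apply hx
    have := congrFun h k
    rw [Function.update_self] at this
    have h2 : -(x k : ℝ) = (x k : ℝ) := by
      have h3 := congrArg Subtype.val this
      simpa [negSign] using h3
    rcases sign_mem_cases (x k) with h3 | h3 <;> rw [h3] at h2 <;> norm_num at h2
  · intro x; exact Finset.mem_univ _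
  · intro x
    rw [Function.update_self]
    funext i
    rcases eq_or_ne i k with rfl | hik
    · simp [negSign_negSign]
    · simp [Function.update_of_ne hik]

lemma signs_sum_diag {n : ℕ} (j : Fin n) :
    ∑ x : Fin n → ↥SignSet, ((x j : ℝ) : ℂ) * ((x j : ℝ) : ℂ) = (2 : ℂ) ^ n := by
  have h1 : ∀ x : Fin n → ↥SignSet, ((x j : ℝ) : ℂ) * ((x j : ℝ) : ℂ) = 1 := by
    intro x
    rcases sign_mem_cases (x j) with h | h <;> rw [h] <;> norm_num
  rw [Finset.sum_congr rfl fun x _ => h1 x, Finset.sum_const, Finset.card_univ]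
  have hcard : Fintype.card (Fin n → ↥SignSet) = 2 ^ n := by
    have h2 : Fintype.card ↥SignSet = 2 := by
      rw [Fintype.card_coe, Finset.card_insert_of_notMem (by norm_num),
        Finset.card_singleton]
    rw [Fintype.card_fun, h2, Fintype.card_fin]
  rw [hcard]
  simp

end aux

/-- For a projective measurement `(P j)_{j : Fin n}` with `n ≥ 1` on a complex
Hilbert space, the channel `A ↦ ∑ j, P j * A * P j` is a mixture that applies
the identity map with nonzero probability `q = 2 ^ (1 - n)`:
`∑ j, P j A P j = 2^(1-n) • A + (1/2^n) • ∑_{x ∈ S} U x * A * (U x)†`, where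
`S` is the set of sign strings excluding the two constant strings. -/
theorem sum_proj_conj_eq_id_mixture
    {H : Type*} [NormedAddCommGroup H] [InnerProductSpace ℂ H] [CompleteSpace H]
    {n : ℕ} (hn : 1 ≤ n) (P : Fin n → H →L[ℂ] H)
    (hsa : ∀ j, IsSelfAdjoint (P j))
    (hidem : ∀ j, P j * P j = P j)
    (horth : ∀ j k, j ≠ k → P j * P k = 0)
    (hsum : ∑ j, P j = 1)
    (A : H →L[ℂ] H) :
    (0 : ℝ) < (2 : ℝ) ^ ((1 : ℤ) - n) ∧
    ∑ j, P j * A * P j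
      = ((2 : ℂ) ^ ((1 : ℤ) - n)) • A + (1 / 2 ^ n : ℂ) •
          ∑ x ∈ Finset.univ.filter
              (fun x : Fin n → ({-1, 1} : Finset ℝ) =>
                x ≠ (fun _ => ⟨1, by norm_num⟩) ∧ x ≠ (fun _ => ⟨-1, by norm_num⟩)),
            (∑ j, ((x j : ℝ) : ℂ) • P j) * A * star (∑ j, ((x j : ℝ) : ℂ) • P j) := by
  classical
  constructor
  · positivity
  set U : (Fin n → ↥SignSet) → (H →L[ℂ] H) := fun x => ∑ j, ((x j : ℝ) : ℂ) • P j with hU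
  have hstar : ∀ x, star (U x) = U x := by
    intro x
    rw [hU]
    simp only [star_sum, star_smul, Complex.star_def, Complex.conj_ofReal]
    exact Finset.sum_congr rfl fun j _ => by rw [(hsa j).star_eq]
  -- term expansion
  have hterm : ∀ x : Fin n → ↥SignSet,
      U x * A * star (U x)
        = ∑ j, ∑ k, (((x j : ℝ) : ℂ) * ((x k : ℝ) : ℂ)) • (P j * A * P k) := by
    intro x
    rw [hstar, hU]
    rw [Finset.sum_mul, Finset.sum_mul]
    refine Finset.sum_congr rfl fun j _ => ?_
    rw [Finset.mul_sum]
    refine Finset.sum_congr rfl fun k _ => ?_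
    rw [smul_mul_assoc, smul_mul_assoc, mul_smul_comm, smul_smul]
  -- total sum over all sign strings
  have htotal : ∑ x : Fin n → ↥SignSet, U x * A * star (U x)
      = (2 : ℂ) ^ n • ∑ j, P j * A * P j := by
    calc ∑ x : Fin n → ↥SignSet, U x * A * star (U x)
        = ∑ x : Fin n → ↥SignSet, ∑ j, ∑ k,
            (((x j : ℝ) : ℂ) * ((x k : ℝ) : ℂ)) • (P j * A * P k) :=
          Finset.sum_congr rfl fun x _ => hterm x
      _ = ∑ j, ∑ k, (∑ x : Fin n → ↥SignSet,
            (((x j : ℝ) : ℂ) * ((x k : ℝ) : ℂ))) • (P j * A * P k) := by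
          rw [Finset.sum_comm]
          refine Finset.sum_congr rfl fun j _ => ?_
          rw [Finset.sum_comm]
          refine Finset.sum_congr rfl fun k _ => ?_
          rw [Finset.sum_smul]
      _ = ∑ j, (2 : ℂ) ^ n • (P j * A * P j) := by
          refine Finset.sum_congr rfl fun j _ => ?_
          rw [Finset.sum_eq_single j]
          · rw [signs_sum_diag]
          · intro k _ hkj
            rw [signs_sum_offdiag j k (Ne.symm hkj), zero_smul]
          · intro h; exact absurd (Finset.mem_univ j) h
      _ = (2 : ℂ) ^ n • ∑ j, P j * A * P j := by rw [Finset.smul_sum]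
  -- the two constant strings
  have hone : (⟨1, by norm_num⟩ : ↥SignSet) = (⟨1, by norm_num⟩ : ↥SignSet) := rfl
  set e₁ : Fin n → ↥SignSet := fun _ => ⟨1, by norm_num⟩ with he₁
  set e₂ : Fin n → ↥SignSet := fun _ => ⟨-1, by norm_num⟩ with he₂
  have hU₁ : U e₁ = 1 := by
    rw [hU]; simp only [he₁]; push_cast; simp [hsum]
  have hU₂ : U e₂ = -1 := by
    rw [hU]; simp only [he₂]; push_cast
    simp only [neg_smul, one_smul, Finset.sum_neg_distrib, hsum]
  have hne : e₁ ≠ e₂ := by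
    intro h
    have := congrFun h ⟨0, hn⟩
    rw [he₁, he₂] at this
    have : (1 : ℝ) = -1 := congrArg Subtype.val this
    norm_num at this
  -- split the universe
  have hsplit : ∑ x ∈ Finset.univ.filter (fun x : Fin n → ↥SignSet => x ≠ e₁ ∧ x ≠ e₂),
      U x * A * star (U x)
      = (∑ x : Fin n → ↥SignSet, U x * A * star (U x))
        - (U e₁ * A * star (U e₁)) - (U e₂ * A * star (U e₂)) := by
    have hfilter : Finset.univ.filter (fun x : Fin n → ↥SignSet => x ≠ e₁ ∧ x ≠ e₂)
        = Finset.univ \ {e₁, e₂} := by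
      ext x
      simp [Finset.mem_sdiff, Finset.mem_insert, not_or]
    rw [hfilter, Finset.sum_sdiff_eq_sub (by intro x _; exact Finset.mem_univ x),
      Finset.sum_pair hne]
    abel
  have key : ∑ x ∈ Finset.univ.filter (fun x : Fin n → ↥SignSet => x ≠ e₁ ∧ x ≠ e₂),
      U x * A * star (U x)
      = (2 : ℂ) ^ n • ∑ j, P j * A * P j - A - A := by
    rw [hsplit, htotal, hU₁, hU₂]
    simp
  rw [key]
  have h2n : ((2 : ℂ) ^ n) ≠ 0 := pow_ne_zero _ two_ne_zero
  rw [smul_sub, smul_sub, smul_smul]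
  rw [one_div, inv_mul_cancel₀ h2n, one_smul]
  have hz : ((2 : ℂ) ^ ((1 : ℤ) - n)) = 2 * ((2 : ℂ) ^ n)⁻¹ := by
    rw [zpow_sub₀ (by norm_num : (2:ℂ) ≠ 0), zpow_one, zpow_natCast, div_eq_mul_inv]
  rw [hz]
  module
end

section
/- Let n ≥ 1 and let (P_j)_{j ∈ Fin n} be a projective measurement on a complex Hilbert space H, and let A be a positive operator on H (i.e. ⟨v, Av⟩ is real and nonnegative for all v). Then the operator Σ_j P_j A P_j − 2^{1−n} · A is also positive: for every vector v, ⟨v, (Σ_j P_j A P_j) v⟩ ≥ 2^{1−n} · ⟨v, A v⟩. -/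
open scoped InnerProductSpace

/-- For a projective measurement `(P j)_{j : Fin n}` with `n ≥ 1` on a complex
Hilbert space and a positive operator `A` (i.e. `⟪v, A v⟫` real and
nonnegative), the operator `∑ j, P j * A * P j - 2^(1-n) • A` is positive:
`⟪v, (∑ j, P j A P j) v⟫ ≥ 2^(1-n) * ⟪v, A v⟫` for every `v`. -/
theorem sum_proj_conj_pos_part
    {H : Type*} [NormedAddCommGroup H] [InnerProductSpace ℂ H] [CompleteSpace H]
    {n : ℕ} (hn : 1 ≤ n) (P : Fin n → H →L[ℂ] H)
    (hsa : ∀ j, IsSelfAdjoint (P j))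
    (hidem : ∀ j, P j * P j = P j)
    (horth : ∀ j k, j ≠ k → P j * P k = 0)
    (hsum : ∑ j, P j = 1)
    (A : H →L[ℂ] H)
    (hA : ∀ v : H, 0 ≤ (⟪v, A v⟫_ℂ).re ∧ (⟪v, A v⟫_ℂ).im = 0) :
    ∀ v : H, (2 : ℝ) ^ ((1 : ℤ) - n) * (⟪v, A v⟫_ℂ).re ≤
      (⟪v, (∑ j, P j * A * P j) v⟫_ℂ).re := by
  intro v
  set w : Fin n → H := fun j => P j v with hw
  set t : Fin n → ℝ := fun j => (⟪w j, A (w j)⟫_ℂ).re with ht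
  set S : ℝ := ∑ j, t j with hS
  -- v = ∑ w j
  have hv : ∑ j, w j = v := by
    simp only [hw, ← ContinuousLinearMap.sum_apply, hsum, ContinuousLinearMap.one_apply]
  -- self-adjointness
  have hPinner : ∀ j (x y : H), ⟪x, P j y⟫_ℂ = ⟪P j x, y⟫_ℂ := by
    intro j x y
    rw [← ContinuousLinearMap.adjoint_inner_left, (hsa j).adjoint_eq]
  -- RHS = S
  have hRHS : (⟪v, (∑ j, P j * A * P j) v⟫_ℂ).re = S := by
    rw [ContinuousLinearMap.sum_apply, inner_sum, Complex.re_sum]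
    refine Finset.sum_congr rfl fun j _ => ?_
    simp only [ContinuousLinearMap.mul_apply, hPinner j]
    rfl
  -- pairwise inequality
  have key : ∀ x y : H, (⟪x, A y⟫_ℂ).re + (⟪y, A x⟫_ℂ).re ≤
      (⟪x, A x⟫_ℂ).re + (⟪y, A y⟫_ℂ).re := by
    intro x y
    have h := (hA (x - y)).1
    rw [map_sub, inner_sub_left, inner_sub_right, inner_sub_right] at h
    simp only [Complex.sub_re] at h
    linarith
  -- expand ⟪v, A v⟫
  have h1 : (⟪v, A v⟫_ℂ).re = ∑ j, ∑ k, (⟪w j, A (w k)⟫_ℂ).re := by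
    conv_lhs => rw [← hv]
    rw [map_sum, sum_inner, Complex.re_sum]
    refine Finset.sum_congr rfl fun j _ => ?_
    rw [inner_sum, Complex.re_sum]
  -- t nonneg, S nonneg
  have htnn : ∀ j, 0 ≤ t j := fun j => (hA (w j)).1
  have hSnn : 0 ≤ S := Finset.sum_nonneg fun j _ => htnn j
  -- main bound
  have h2 : (⟪v, A v⟫_ℂ).re * 2 ≤ (n : ℝ) * S * 2 := by
    rw [h1]
    have : (∑ j, ∑ k, (⟪w j, A (w k)⟫_ℂ).re) * 2 =
        ∑ j, ∑ k, ((⟪w j, A (w k)⟫_ℂ).re + (⟪w k, A (w j)⟫_ℂ).re) := by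
      simp only [Finset.sum_add_distrib]
      rw [Finset.sum_comm (f := fun j k => (⟪w k, A (w j)⟫_ℂ).re)]
      ring
    rw [this]
    calc ∑ j, ∑ k, ((⟪w j, A (w k)⟫_ℂ).re + (⟪w k, A (w j)⟫_ℂ).re)
        ≤ ∑ j, ∑ k, (t j + t k) := by
          refine Finset.sum_le_sum fun j _ => Finset.sum_le_sum fun k _ => key _ _
      _ = (n : ℝ) * S * 2 := by
          simp only [Finset.sum_add_distrib, Finset.sum_const, Finset.card_univ,
            Fintype.card_fin, nsmul_eq_mul]
          rw [← Finset.mul_sum, ← hS]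
          ring
  -- 2^(1-n) * n ≤ 1
  have hc : (2 : ℝ) ^ ((1 : ℤ) - n) * n ≤ 1 := by
    have hnle : (n : ℝ) ≤ 2 ^ (n - 1) := by
      exact_mod_cast Nat.le_of_lt_succ (by
        have := Nat.lt_two_pow_self (n := n - 1)
        omega)
    have h2pos : (0 : ℝ) < 2 ^ (n - 1) := by positivity
    have hz : (2 : ℝ) ^ ((1 : ℤ) - n) = ((2 : ℝ) ^ (n - 1))⁻¹ := by
      rw [← zpow_natCast (2 : ℝ) (n - 1), ← zpow_neg]
      congr 1
      omega
    rw [hz, inv_mul_le_iff₀ h2pos]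
    linarith
  have hcpos : (0 : ℝ) < (2 : ℝ) ^ ((1 : ℤ) - n) := by positivity
  rw [hRHS]
  have hAv : (⟪v, A v⟫_ℂ).re ≤ (n : ℝ) * S := by linarith
  calc (2 : ℝ) ^ ((1 : ℤ) - n) * (⟪v, A v⟫_ℂ).re
      ≤ (2 : ℝ) ^ ((1 : ℤ) - n) * ((n : ℝ) * S) := by
        exact mul_le_mul_of_nonneg_left hAv hcpos.le
    _ = ((2 : ℝ) ^ ((1 : ℤ) - n) * n) * S := by ring
    _ ≤ 1 * S := mul_le_mul_of_nonneg_right hc hSnn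
    _ = S := one_mul S
end

section
/- Let n ≥ 1, let (P_j)_{j ∈ Fin n} be a family of complex d × d matrices that are self-adjoint idempotents, pairwise orthogonal (P_j P_k = 0 for j ≠ k), and sum to the identity, and let ρ and E be positive semidefinite complex d × d matrices. Then Re(trace(E · Σ_j P_j ρ P_j)) ≥ 2^{1−n} · Re(trace(E · ρ)). In particular, if trace(E ρ) > 0 then trace(E · Σ_j P_j ρ P_j) > 0: performing the projective measurement and discarding the outcome cannot make a subsequently possible measurement outcome impossible. -/
open scoped ComplexOrder

open Matrix in
private lemma psd_trace_re_nonneg {d : ℕ} {M : Matrix (Fin d) (Fin d) ℂ}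
    (hM : M.PosSemidef) : 0 ≤ (M.trace).re := by
  have hdiag : ∀ i, 0 ≤ (M i i).re := by
    intro i
    have h := hM.dotProduct_mulVec_nonneg (Pi.single i 1)
    have he : (star (Pi.single i 1) ⬝ᵥ (M *ᵥ Pi.single i 1)) = M i i := by
      have hstar1 : star (Pi.single i (1:ℂ) : Fin d → ℂ) = Pi.single i 1 := by
        funext x; by_cases h : x = i <;> simp [Pi.single_apply, h]
      rw [hstar1]
      simp [dotProduct, Matrix.mulVec_single, Pi.single_apply]
    rw [he] at h
    exact (Complex.nonneg_iff.mp h).1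
  rw [Matrix.trace]
  simpa [Matrix.diag] using Finset.sum_nonneg fun i _ => hdiag i

open Matrix in
private lemma psd_trace_mul_re_nonneg {d : ℕ} {A B : Matrix (Fin d) (Fin d) ℂ}
    (hA : A.PosSemidef) (hB : B.PosSemidef) : 0 ≤ ((A * B).trace).re := by
  obtain ⟨C, rfl⟩ : ∃ C : Matrix (Fin d) (Fin d) ℂ, B = Cᴴ * C := by
    classical
    open scoped MatrixOrder in
    obtain ⟨X, hX, -, hXX⟩ := sub_zero B ▸ CFC.exists_sqrt_of_isSelfAdjoint_of_quasispectrumRestricts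
      hB.isHermitian (QuasispectrumRestricts.nnreal_of_nonneg hB.nonneg)
    exact ⟨X, by rw [sub_zero] at hXX; rw [← hXX, show Xᴴ = X from hX]⟩
  have h1 : (A * (Cᴴ * C)).trace = (C * A * Cᴴ).trace := by
    rw [← Matrix.mul_assoc, Matrix.trace_mul_cycle]
  rw [h1]
  exact psd_trace_re_nonneg (hA.mul_mul_conjTranspose_same C)

/-- For a projective measurement `(P j)_{j : Fin n}` (`n ≥ 1`) of complex
`d × d` matrices and positive semidefinite matrices `ρ` (state) and `E`
(POVM element), `Re(tr(E · ∑ j, P j ρ P j)) ≥ 2^(1-n) · Re(tr(E ρ))`.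
In particular, if `tr(E ρ) > 0` then `tr(E · ∑ j, P j ρ P j) > 0`:
performing the measurement and discarding the outcome cannot make a
subsequently possible outcome impossible. -/
theorem measurement_disturbance_retains_possibility
    {d n : ℕ} (hn : 1 ≤ n) (P : Fin n → Matrix (Fin d) (Fin d) ℂ)
    (hsa : ∀ j, (P j).conjTranspose = P j)
    (hidem : ∀ j, P j * P j = P j)
    (horth : ∀ j k, j ≠ k → P j * P k = 0)
    (hsum : ∑ j, P j = 1)
    (ρ E : Matrix (Fin d) (Fin d) ℂ) (hρ : ρ.PosSemidef) (hE : E.PosSemidef) :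
    (2 : ℝ) ^ ((1 : ℤ) - n) * ((E * ρ).trace).re ≤
      ((E * ∑ j, P j * ρ * P j).trace).re ∧
    (0 < ((E * ρ).trace).re → 0 < ((E * ∑ j, P j * ρ * P j).trace).re) := by
  classical
  -- sign function
  set s : Bool → ℂ := fun b => if b then -1 else 1 with hs
  have hss : ∀ b, s b * s b = 1 := by intro b; cases b <;> simp [hs]
  have hstar : ∀ b, star (s b) = s b := by intro b; cases b <;> simp [hs]
  have hneg : ∀ b, s (!b) = - s b := by intro b; cases b <;> simp [hs]
  -- sign unitaries
  set U : (Fin n → Bool) → Matrix (Fin d) (Fin d) ℂ :=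
    fun ε => ∑ j, s (ε j) • P j with hU
  have hUsa : ∀ ε, (U ε).conjTranspose = U ε := by
    intro ε
    simp only [hU, Matrix.conjTranspose_sum, Matrix.conjTranspose_smul]
    exact Finset.sum_congr rfl fun j _ => by rw [hstar, hsa]
  -- each term expands
  have hexp : ∀ ε, U ε * ρ * U ε = ∑ j, ∑ k, (s (ε j) * s (ε k)) • (P j * ρ * P k) := by
    intro ε
    simp only [hU, Finset.sum_mul, Finset.mul_sum, Matrix.smul_mul, Matrix.mul_smul,
      smul_smul]
    rw [Finset.sum_comm]
    refine Finset.sum_congr rfl fun j _ => Finset.sum_congr rfl fun k _ => ?_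
    rw [mul_comm (s (ε k)) (s (ε j))]
  -- key orthogonality of signs
  have hkey : ∀ j k : Fin n, (∑ ε : Fin n → Bool, s (ε j) * s (ε k))
      = if j = k then (2 ^ n : ℂ) else 0 := by
    intro j k
    by_cases hjk : j = k
    · subst hjk
      simp only [if_pos rfl]
      rw [Finset.sum_congr rfl fun ε _ => hss (ε j), Finset.sum_const]
      simp [Fintype.card_fun]
    · rw [if_neg hjk]
      set f : (Fin n → Bool) → ℂ := fun ε => s (ε j) * s (ε k) with hf
      have hinv : Function.Involutive (fun ε : Fin n → Bool => Function.update ε j (!ε j)) := by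
        intro ε
        funext i
        by_cases hij : i = j
        · subst hij; simp
        · simp [Function.update_of_ne hij]
      have hflip : ∀ ε, f (Function.update ε j (!ε j)) = - f ε := by
        intro ε
        have h1 : Function.update ε j (!ε j) j = !ε j := Function.update_self _ _ _
        have h2 : Function.update ε j (!ε j) k = ε k :=
          Function.update_of_ne (Ne.symm hjk) _ _
        simp only [hf, h1, h2, hneg, neg_mul]
      have hcomp : ∑ ε, f ((hinv.toPerm _) ε) = ∑ ε, f ε := Equiv.sum_comp _ f
      have : ∑ ε, f ε = - ∑ ε, f ε := by
        calc ∑ ε, f ε = ∑ ε, f ((hinv.toPerm _) ε) := hcomp.symm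
          _ = ∑ ε, - f ε := Finset.sum_congr rfl fun ε _ => hflip ε
          _ = - ∑ ε, f ε := by rw [Finset.sum_neg_distrib]
      have h0 : (2 : ℂ) * ∑ ε, f ε = 0 := by linear_combination this
      have := mul_eq_zero.mp h0
      simpa using this.resolve_left (by norm_num)
  -- sum over all sign vectors
  have hA : ∑ ε : Fin n → Bool, U ε * ρ * U ε
      = (2 ^ n : ℂ) • ∑ j, P j * ρ * P j := by
    rw [Finset.sum_congr rfl fun ε _ => hexp ε]
    rw [Finset.sum_comm]
    rw [Finset.smul_sum]
    refine Finset.sum_congr rfl fun j _ => ?_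
    rw [Finset.sum_comm]
    have : ∀ k : Fin n, ∑ ε : Fin n → Bool, (s (ε j) * s (ε k)) • (P j * ρ * P k)
        = (if j = k then (2 ^ n : ℂ) else 0) • (P j * ρ * P k) := by
      intro k
      rw [← Finset.sum_smul, hkey]
    rw [Finset.sum_congr rfl fun k _ => this k]
    simp [ite_smul]
  -- each term nonneg
  have hUpsd : ∀ ε, (U ε * ρ * U ε).PosSemidef := by
    intro ε
    have := hρ.mul_mul_conjTranspose_same (U ε)
    rwa [hUsa] at this
  have hTnn : ∀ ε, 0 ≤ ((E * (U ε * ρ * U ε)).trace).re :=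
    fun ε => psd_trace_mul_re_nonneg hE (hUpsd ε)
  -- constant sign vectors give tr(Eρ)
  have hUf : U (fun _ => false) = 1 := by
    simp only [hU, hs]; simpa using hsum
  have hUt : U (fun _ => true) = -1 := by
    simp only [hU, hs]
    simp only [if_true, neg_one_smul]
    rw [Finset.sum_neg_distrib, hsum]
  have hTf : ((E * (U (fun _ => false) * ρ * U (fun _ => false))).trace).re
      = ((E * ρ).trace).re := by rw [hUf]; simp
  have hTt : ((E * (U (fun _ => true) * ρ * U (fun _ => true))).trace).re
      = ((E * ρ).trace).re := by rw [hUt]; simp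
  -- total sum equals 2^n * target
  set x : ℝ := ((E * ∑ j, P j * ρ * P j).trace).re with hx
  set r : ℝ := ((E * ρ).trace).re with hr
  have htot : ∑ ε : Fin n → Bool, ((E * (U ε * ρ * U ε)).trace).re = 2 ^ n * x := by
    have h1 : ∑ ε : Fin n → Bool, (E * (U ε * ρ * U ε)).trace
        = (E * ∑ ε : Fin n → Bool, U ε * ρ * U ε).trace := by
      rw [Finset.mul_sum, Matrix.trace_sum]
    have h2 : (E * ((2 ^ n : ℂ) • ∑ j, P j * ρ * P j)).trace
        = (2 ^ n : ℂ) * (E * ∑ j, P j * ρ * P j).trace := by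
      rw [Matrix.mul_smul, Matrix.trace_smul, smul_eq_mul]
    have h3 : ∑ ε : Fin n → Bool, (E * (U ε * ρ * U ε)).trace
        = (2 ^ n : ℂ) * (E * ∑ j, P j * ρ * P j).trace := by
      rw [h1, hA, h2]
    have h4 := congrArg Complex.re h3
    rw [Complex.re_sum] at h4
    rw [h4, hx]
    have h5 : ((2:ℂ)^n) = (((2:ℝ)^n : ℝ) : ℂ) := by push_cast; ring
    rw [h5, Complex.re_ofReal_mul]
  -- lower bound on total sum
  have hne : (fun _ : Fin n => false) ≠ (fun _ : Fin n => true) := by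
    intro h
    have := congrFun h ⟨0, hn⟩
    simp at this
  have hpair : 2 * r ≤ ∑ ε : Fin n → Bool, ((E * (U ε * ρ * U ε)).trace).re := by
    have hsub : ({(fun _ : Fin n => false), (fun _ : Fin n => true)} : Finset (Fin n → Bool))
        ⊆ Finset.univ := Finset.subset_univ _
    have h5 : ∑ ε ∈ ({(fun _ : Fin n => false), (fun _ : Fin n => true)} :
          Finset (Fin n → Bool)), ((E * (U ε * ρ * U ε)).trace).re = 2 * r := by
      rw [Finset.sum_pair hne, hTf, hTt]; ring
    calc 2 * r = _ := h5.symm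
      _ ≤ _ := Finset.sum_le_sum_of_subset_of_nonneg hsub fun ε _ _ => hTnn ε
  have hmain : 2 * r ≤ 2 ^ n * x := htot ▸ hpair
  have hpow : (0:ℝ) < 2 ^ n := by positivity
  have hineq : (2 : ℝ) ^ ((1 : ℤ) - n) * r ≤ x := by
    have hz : (2 : ℝ) ^ ((1 : ℤ) - n) = 2 / 2 ^ n := by
      rw [zpow_sub₀ (by norm_num : (2:ℝ) ≠ 0), zpow_one, zpow_natCast]
    rw [hz, div_mul_eq_mul_div, div_le_iff₀ hpow]
    linarith [hmain]
  refine ⟨hineq, fun hrpos => lt_of_lt_of_le ?_ hineq⟩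
  positivity
end

section
/- In ℂ³ with standard orthonormal basis e₁, e₂, e₃, let ψ = (e₁ + e₂ + e₃)/√3 and φ = (e₁ + e₂ − e₃)/√3, and let P₁, P₂ be the orthogonal projections onto the spans of e₁ and e₂ respectively. Then the ABL probabilities satisfy ℙ(P₁|ψ,φ) = 1 and ℙ(P₂|ψ,φ) = 1; explicitly, ⟨φ, (1−P₁)ψ⟩ = 0, ⟨φ, (1−P₂)ψ⟩ = 0, and ⟨φ, P₁ψ⟩ ≠ 0, ⟨φ, P₂ψ⟩ ≠ 0. (This is the three-box paradox: whichever of box 1 or box 2 is opened, the ball is found there with certainty.) -/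
open scoped InnerProductSpace

/-- The standard basis vector `eᵢ` of `ℂ³`. -/
noncomputable def e (i : Fin 3) : EuclideanSpace ℂ (Fin 3) :=
  EuclideanSpace.single i 1

/-- The rank-one orthogonal projection onto the span of a unit vector `v`,
`w ↦ ⟪v, w⟫ • v`. -/
noncomputable def rankOneProj (v : EuclideanSpace ℂ (Fin 3)) :
    EuclideanSpace ℂ (Fin 3) →L[ℂ] EuclideanSpace ℂ (Fin 3) :=
  (innerSL ℂ v).smulRight v

/-- The pre-selection of the three-box paradox, `ψ = (e₁ + e₂ + e₃)/√3`. -/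
noncomputable def ψ : EuclideanSpace ℂ (Fin 3) :=
  ((Real.sqrt 3 : ℂ))⁻¹ • (e 0 + e 1 + e 2)

/-- The post-selection of the three-box paradox, `φ = (e₁ + e₂ - e₃)/√3`. -/
noncomputable def φ : EuclideanSpace ℂ (Fin 3) :=
  ((Real.sqrt 3 : ℂ))⁻¹ • (e 0 + e 1 - e 2)


lemma s3 : ((Real.sqrt 3 : ℂ))⁻¹ * ((Real.sqrt 3 : ℂ))⁻¹ = 3⁻¹ := by
  rw [← mul_inv, ← Complex.ofReal_mul, Real.mul_self_sqrt (by norm_num : (0:ℝ) ≤ 3)]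
  norm_num

lemma inner_e_ψ (i : Fin 3) : ⟪e i, ψ⟫_ℂ = ((Real.sqrt 3 : ℂ))⁻¹ := by
  fin_cases i <;>
  simp [ψ, e, inner_smul_right, inner_add_right, EuclideanSpace.inner_single_left,
    EuclideanSpace.single_apply]

lemma inner_φ_e0 : ⟪φ, e 0⟫_ℂ = ((Real.sqrt 3 : ℂ))⁻¹ := by
  simp [φ, e, inner_smul_left, inner_add_left, inner_sub_left,
    EuclideanSpace.inner_single_left, EuclideanSpace.single_apply]

lemma inner_φ_e1 : ⟪φ, e 1⟫_ℂ = ((Real.sqrt 3 : ℂ))⁻¹ := by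
  simp [φ, e, inner_smul_left, inner_add_left, inner_sub_left,
    EuclideanSpace.inner_single_left, EuclideanSpace.single_apply]

lemma inner_φ_ψ : ⟪φ, ψ⟫_ℂ = 3⁻¹ := by
  simp [φ, ψ, e, inner_smul_left, inner_smul_right, inner_add_left, inner_sub_left,
    inner_add_right, EuclideanSpace.inner_single_left, EuclideanSpace.single_apply]
  rw [show ((Real.sqrt 3:ℝ):ℂ)⁻¹ * (((Real.sqrt 3:ℝ):ℂ))⁻¹ = 3⁻¹ from s3]

lemma inner_P0 : ⟪φ, rankOneProj (e 0) ψ⟫_ℂ = 3⁻¹ := by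
  simp only [rankOneProj, ContinuousLinearMap.smulRight_apply, innerSL_apply_apply,
    inner_smul_right, inner_e_ψ, inner_φ_e0, s3]

lemma inner_P1 : ⟪φ, rankOneProj (e 1) ψ⟫_ℂ = 3⁻¹ := by
  simp only [rankOneProj, ContinuousLinearMap.smulRight_apply, innerSL_apply_apply,
    inner_smul_right, inner_e_ψ, inner_φ_e1, s3]

lemma inner_Q0 : ⟪φ, (1 - rankOneProj (e 0)) ψ⟫_ℂ = 0 := by
  simp only [ContinuousLinearMap.sub_apply, ContinuousLinearMap.one_apply, inner_sub_right,
    inner_P0, inner_φ_ψ, sub_self]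

lemma inner_Q1 : ⟪φ, (1 - rankOneProj (e 1)) ψ⟫_ℂ = 0 := by
  simp only [ContinuousLinearMap.sub_apply, ContinuousLinearMap.one_apply, inner_sub_right,
    inner_P1, inner_φ_ψ, sub_self]

/-- The three-box paradox: with pre-selection `ψ` and post-selection `φ`,
the ABL probabilities of the projections onto box 1 and box 2 are both `1`;
explicitly `⟪φ, (1 - Pᵢ) ψ⟫ = 0` and `⟪φ, Pᵢ ψ⟫ ≠ 0` for `i = 1, 2`. -/
theorem three_box_paradox :
    ⟪φ, (1 - rankOneProj (e 0)) ψ⟫_ℂ = 0 ∧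
    ⟪φ, (1 - rankOneProj (e 1)) ψ⟫_ℂ = 0 ∧
    ⟪φ, rankOneProj (e 0) ψ⟫_ℂ ≠ 0 ∧
    ⟪φ, rankOneProj (e 1) ψ⟫_ℂ ≠ 0 ∧
    ‖⟪φ, rankOneProj (e 0) ψ⟫_ℂ‖ ^ 2 /
        (‖⟪φ, rankOneProj (e 0) ψ⟫_ℂ‖ ^ 2 +
          ‖⟪φ, (1 - rankOneProj (e 0)) ψ⟫_ℂ‖ ^ 2) = 1 ∧
    ‖⟪φ, rankOneProj (e 1) ψ⟫_ℂ‖ ^ 2 /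
        (‖⟪φ, rankOneProj (e 1) ψ⟫_ℂ‖ ^ 2 +
          ‖⟪φ, (1 - rankOneProj (e 1)) ψ⟫_ℂ‖ ^ 2) = 1 := by
  rw [inner_P0, inner_P1, inner_Q0, inner_Q1]
  norm_num
end

section
/- In ℂ³ with standard orthonormal basis e₁, e₂, e₃, let P₁ and P₂ be the orthogonal projections onto the spans of e₁ and e₂. There is no function f from the orthogonal projections on ℂ³ to ℝ satisfying the algebraic conditions with f(P₁) = 1 and f(P₂) = 1. (The three-box paradox admits no extension of its ABL probabilities to the generated partial boolean algebra.) -/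
/-- An orthogonal projection: a self-adjoint idempotent continuous linear
operator. -/
def IsOrthogonalProjection
    (P : EuclideanSpace ℂ (Fin 3) →L[ℂ] EuclideanSpace ℂ (Fin 3)) : Prop :=
  IsSelfAdjoint P ∧ P * P = P

open scoped InnerProductSpace

lemma rankOneProj_apply (v x : EuclideanSpace ℂ (Fin 3)) :
    rankOneProj v x = ⟪v, x⟫_ℂ • v := rfl

lemma inner_e (i j : Fin 3) : ⟪e i, e j⟫_ℂ = if i = j then 1 else 0 := by
  simp [e, EuclideanSpace.inner_single_left, EuclideanSpace.single_apply, eq_comm]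

lemma mul_e_zero {i j : Fin 3} (h : i ≠ j) :
    rankOneProj (e i) * rankOneProj (e j) = 0 := by
  ext x
  simp only [ContinuousLinearMap.mul_apply, rankOneProj_apply, inner_smul_right, inner_e,
    ContinuousLinearMap.zero_apply, if_neg h, mul_zero, zero_smul]

lemma proj_e (i : Fin 3) : IsOrthogonalProjection (rankOneProj (e i)) := by
  constructor
  · rw [ContinuousLinearMap.isSelfAdjoint_iff_isSymmetric]
    intro x y
    simp [rankOneProj_apply, inner_smul_left, inner_smul_right, inner_e, mul_comm]
  · ext x
    simp only [ContinuousLinearMap.mul_apply, rankOneProj_apply, inner_smul_right, inner_e,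
      if_true, mul_one]

/-- The three-box paradox admits no extension to a function `f` on the
orthogonal projections of `ℂ³` satisfying the algebraic conditions with
`f(P₁) = f(P₂) = 1`. -/
theorem three_box_no_algebraic_extension :
    ¬ ∃ f : (EuclideanSpace ℂ (Fin 3) →L[ℂ] EuclideanSpace ℂ (Fin 3)) → ℝ,
      (∀ P, IsOrthogonalProjection P → 0 ≤ f P ∧ f P ≤ 1) ∧
      (f 1 = 1 ∧ f 0 = 0) ∧
      (∀ P Q, IsOrthogonalProjection P → IsOrthogonalProjection Q →
        P * Q = Q * P → f (P + Q - P * Q) = f P + f Q - f (P * Q)) ∧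
      f (rankOneProj (e 0)) = 1 ∧ f (rankOneProj (e 1)) = 1 := by
  rintro ⟨f, hb, ⟨-, h0⟩, hadd, h1, h2⟩
  set P := rankOneProj (e 0)
  set Q := rankOneProj (e 1)
  have hPQ : P * Q = 0 := mul_e_zero (by decide)
  have hQP : Q * P = 0 := mul_e_zero (by decide)
  have hP := proj_e 0
  have hQ := proj_e 1
  have key := hadd P Q hP hQ (by rw [hPQ, hQP])
  rw [hPQ, h1, h2, h0, sub_zero] at key
  have hsum : IsOrthogonalProjection (P + Q) := by
    refine ⟨IsSelfAdjoint.add (R := EuclideanSpace ℂ (Fin 3) →L[ℂ] EuclideanSpace ℂ (Fin 3)) hP.1 hQ.1, ?_⟩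
    have : (P + Q) * (P + Q) = P * P + P * Q + (Q * P + Q * Q) := by
      rw [add_mul, mul_add, mul_add]
    rw [this, hPQ, hQP, hP.2, hQ.2, add_zero, zero_add]
  have := (hb _ hsum).2
  rw [key] at this
  linarith
end

section
/- Let H be a complex inner product space, ψ, φ ∈ H with ⟨φ, ψ⟩ ≠ 0, and P a continuous linear operator on H. If the ABL probability of P equals 1, i.e. |⟨φ, Pψ⟩|² = |⟨φ, Pψ⟩|² + |⟨φ, (1−P)ψ⟩|², then the weak value satisfies w(P|ψ,φ) = 1. If the ABL probability of P equals 0, i.e. ⟨φ, Pψ⟩ = 0, then w(P|ψ,φ) = 0. Hence whenever the ABL probability of P is 0 or 1, the weak value of P equals the ABL probability. -/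
open scoped InnerProductSpace

/-- If the ABL probability of `P` is 1 (numerator equals denominator), the
weak value `w(P) = Re(⟪φ, P ψ⟫ / ⟪φ, ψ⟫)` equals 1; if the ABL probability
is 0 (`⟪φ, P ψ⟫ = 0`), the weak value equals 0. Hence 0/1 ABL probabilities
are reproduced by the weak values. -/
theorem weak_value_eq_abl_of_zero_one
    {H : Type*} [NormedAddCommGroup H] [InnerProductSpace ℂ H]
    (ψ φ : H) (hφψ : ⟪φ, ψ⟫_ℂ ≠ 0) (P : H →L[ℂ] H) :
    (‖⟪φ, P ψ⟫_ℂ‖ ^ 2 = ‖⟪φ, P ψ⟫_ℂ‖ ^ 2 + ‖⟪φ, (1 - P) ψ⟫_ℂ‖ ^ 2 →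
      (⟪φ, P ψ⟫_ℂ / ⟪φ, ψ⟫_ℂ).re = 1) ∧
    (⟪φ, P ψ⟫_ℂ = 0 → (⟪φ, P ψ⟫_ℂ / ⟪φ, ψ⟫_ℂ).re = 0) := by
  constructor
  · intro h
    have h0 : ‖⟪φ, (1 - P) ψ⟫_ℂ‖ ^ 2 = 0 := by linarith
    have h1 : ⟪φ, (1 - P) ψ⟫_ℂ = 0 := by
      have := pow_eq_zero_iff (n := 2) (by norm_num) |>.mp h0
      simpa using this
    have h2 : ⟪φ, P ψ⟫_ℂ = ⟪φ, ψ⟫_ℂ := by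
      have : ⟪φ, ψ - P ψ⟫_ℂ = 0 := by simpa using h1
      rw [inner_sub_right] at this
      linear_combination -this
    rw [h2, div_self hφψ]
    simp
  · intro h
    rw [h]
    simp
end
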